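/- In the discrete finite-horizon setting, the value process (V̂_m) defined by V̂_M = Γ and V̂_m = min( γ₋(t_m), max( −γ₊(t_m), E[V̂_{m+1}|F_{t_m}] ) ) satisfies, with σ* := min{ m : V̂_m = γ₋(t_m) } ∧ M and τ* := min{ m : V̂_m = −γ₊(t_m) } ∧ M, that the stopped process (V̂_{m ∧ σ* ∧ τ*})_m is a martingale. -/

import Mathlib

open MeasureTheory

/-- The Dynkin game value process stopped at `σ* ∧ τ*`, where `σ*` and `τ*` are
the first hitting times (capped at `M`) of the upper and lower barriers, is a
martingale. -/
theorem stopped_value_is_martingale {Ω : Type*} {m0 : MeasurableSpace Ω}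
    (μ : Measure Ω) [IsProbabilityMeasure μ] (ℱ : Filtration ℕ m0) (M : ℕ)
    (γminus γplus : ℕ → Ω → ℝ) (V : ℕ → Ω → ℝ) (Γ : Ω → ℝ)
    (hadapted : Adapted ℱ V) (hint : ∀ m, Integrable (V m) μ)
    (hγm : ∀ m, StronglyMeasurable[ℱ m] (γminus m))
    (hγp : ∀ m, StronglyMeasurable[ℱ m] (γplus m))
    (hpos : ∀ m, ∀ᵐ ω ∂μ, 0 < γminus m ω + γplus m ω)
    (hΓ : ∀ᵐ ω ∂μ, -γplus M ω ≤ Γ ω ∧ Γ ω ≤ γminus M ω)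
    (hterm : V M = Γ)
    (hrec : ∀ m < M, ∀ᵐ ω ∂μ,
      V m ω = min (γminus m ω) (max (-γplus m ω) ((μ[V (m + 1)|ℱ m]) ω)))
    (σs τs : Ω → ℕ)
    (hσs : ∀ ω, σs ω = sInf {m : ℕ | m = M ∨ V m ω = γminus m ω})
    (hτs : ∀ ω, τs ω = sInf {m : ℕ | m = M ∨ V m ω = -γplus m ω}) :
    Martingale (stoppedProcess V fun ω => min (σs ω) (τs ω)) ℱ μ := by
  set ρ : Ω → ℕ := fun ω => min (σs ω) (τs ω) with hρ_def
  set ρ' : Ω → WithTop ℕ := fun ω => WithTop.some (ρ ω) with hρ'_def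
  have hρ' : (fun ω => min ((σs ω : ℕ) : WithTop ℕ) ((τs ω : ℕ) : WithTop ℕ)) = ρ' := by
    funext ω; exact (Nat.mono_cast.map_min).symm
  rw [hρ']
  -- σs and τs are stopping times
  have hσ : IsStoppingTime ℱ (fun ω => WithTop.some (σs ω)) := by
    intro n
    simp only [WithTop.coe_le_coe]
    have : {ω | σs ω ≤ n} = ⋃ m ∈ Set.Iic n, {ω | m = M ∨ V m ω = γminus m ω} := by
      ext ω
      simp only [Set.mem_setOf_eq, Set.mem_iUnion, Set.mem_Iic, hσs ω]
      constructor
      · intro h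
        have hne : {m : ℕ | m = M ∨ V m ω = γminus m ω}.Nonempty := ⟨M, Or.inl rfl⟩
        exact ⟨sInf {m : ℕ | m = M ∨ V m ω = γminus m ω}, h, Nat.sInf_mem hne⟩
      · rintro ⟨m, hm, hmem⟩
        exact le_trans (Nat.sInf_le hmem) hm
    rw [this]
    refine MeasurableSet.biUnion (Set.to_countable _) fun m hm => ?_
    have : {ω | m = M ∨ V m ω = γminus m ω}
        = {ω | m = M} ∪ {ω | V m ω = γminus m ω} := by ext ω; simp [Set.mem_setOf_eq]
    rw [this]
    refine MeasurableSet.union ?_ ?_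
    · by_cases h : m = M
      · simp [h]
      · simp [h]
    · exact ℱ.mono hm _
        (measurableSet_eq_fun (hadapted m) (hγm m).measurable)
  have hτ : IsStoppingTime ℱ (fun ω => WithTop.some (τs ω)) := by
    intro n
    simp only [WithTop.coe_le_coe]
    have : {ω | τs ω ≤ n} = ⋃ m ∈ Set.Iic n, {ω | m = M ∨ V m ω = -γplus m ω} := by
      ext ω
      simp only [Set.mem_setOf_eq, Set.mem_iUnion, Set.mem_Iic, hτs ω]
      constructor
      · intro h
        have hne : {m : ℕ | m = M ∨ V m ω = -γplus m ω}.Nonempty := ⟨M, Or.inl rfl⟩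
        exact ⟨sInf {m : ℕ | m = M ∨ V m ω = -γplus m ω}, h, Nat.sInf_mem hne⟩
      · rintro ⟨m, hm, hmem⟩
        exact le_trans (Nat.sInf_le hmem) hm
    rw [this]
    refine MeasurableSet.biUnion (Set.to_countable _) fun m hm => ?_
    have : {ω | m = M ∨ V m ω = -γplus m ω}
        = {ω | m = M} ∪ {ω | V m ω = -γplus m ω} := by ext ω; simp [Set.mem_setOf_eq]
    rw [this]
    refine MeasurableSet.union ?_ ?_
    · by_cases h : m = M
      · simp [h]
      · simp [h]
    · exact ℱ.mono hm _
        (measurableSet_eq_fun (hadapted m) (hγp m).measurable.neg)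
  have hρ : IsStoppingTime ℱ ρ' := by rw [← hρ']; exact hσ.min hτ
  have hρleM : ∀ ω, ρ ω ≤ M := fun ω => by
    have : σs ω ≤ M := hσs ω ▸ Nat.sInf_le (Or.inl rfl)
    exact le_trans (min_le_left _ _) this
  -- martingale
  refine martingale_nat (hadapted.stronglyAdapted.stoppedProcess_of_discrete hρ)
    (fun n => integrable_stoppedProcess hρ hint n) fun n => ?_
  -- decomposition of the increment
  have hA : MeasurableSet[ℱ n] {ω | n < ρ ω} := by
    have := (hρ n).compl
    simpa [Set.compl_setOf, not_le, ρ'] using this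
  have hdecomp : stoppedProcess V ρ' (n + 1)
      = stoppedProcess V ρ' n + {ω | n < ρ ω}.indicator (V (n + 1) - V n) := by
    funext ω
    by_cases h : n < ρ ω
    · have h1 : min (n + 1) (ρ ω) = n + 1 := min_eq_left h
      have h2 : min n (ρ ω) = n := min_eq_left h.le
      have hm : ω ∈ {ω | n < ρ ω} := h
      simp only [stoppedProcess, ρ', ← WithTop.coe_min, h1, h2, WithTop.untopA, WithTop.untopD_coe,
        Pi.add_apply, Set.indicator_of_mem hm, Pi.sub_apply]
      ring
    · have hle : ρ ω ≤ n := not_lt.mp h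
      have h1 : min (n + 1) (ρ ω) = ρ ω := min_eq_right (hle.trans (Nat.le_succ n))
      have h2 : min n (ρ ω) = ρ ω := min_eq_right hle
      have hm : ω ∉ {ω | n < ρ ω} := h
      simp only [stoppedProcess, ρ', ← WithTop.coe_min, h1, h2, WithTop.untopA, WithTop.untopD_coe,
        Pi.add_apply, Set.indicator_of_notMem hm]
      ring
  have hintd : Integrable (V (n + 1) - V n) μ := (hint (n + 1)).sub (hint n)
  have key : {ω | n < ρ ω}.indicator (μ[V (n + 1)|ℱ n] - V n) =ᵐ[μ] 0 := by
    by_cases hn : n < M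
    · filter_upwards [hrec n hn] with ω hω
      by_cases h : n < ρ ω
      · have hσn : n < σs ω := lt_of_lt_of_le h (min_le_left _ _)
        have hτn : n < τs ω := lt_of_lt_of_le h (min_le_right _ _)
        have hnσ : ¬ (n = M ∨ V n ω = γminus n ω) := fun hmem => by
          have := hσs ω ▸ Nat.sInf_le hmem
          omega
        have hnτ : ¬ (n = M ∨ V n ω = -γplus n ω) := fun hmem => by
          have := hτs ω ▸ Nat.sInf_le hmem
          omega
        push_neg at hnσ hnτ
        have h1 : V n ω ≠ γminus n ω := hnσ.2
        have h2 : V n ω ≠ -γplus n ω := hnτ.2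
        have hmax : V n ω = max (-γplus n ω) ((μ[V (n + 1)|ℱ n]) ω) := by
          rcases min_cases (γminus n ω) (max (-γplus n ω) ((μ[V (n + 1)|ℱ n]) ω)) with
            ⟨heq, _⟩ | ⟨heq, _⟩
          · exact absurd (hω.trans heq) h1
          · exact hω.trans heq
        have hce : V n ω = (μ[V (n + 1)|ℱ n]) ω := by
          rcases max_cases (-γplus n ω) ((μ[V (n + 1)|ℱ n]) ω) with ⟨heq, _⟩ | ⟨heq, _⟩
          · exact absurd (hmax.trans heq) h2
          · exact hmax.trans heq
        have hm : ω ∈ {ω | n < ρ ω} := h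
        simp only [Set.indicator_of_mem hm, Pi.sub_apply, Pi.zero_apply, hce]
        ring
      · have hm : ω ∉ {ω | n < ρ ω} := h
        simp [Set.indicator_of_notMem hm]
    · have hempty : ∀ ω, ¬ n < ρ ω := fun ω h => hn (lt_of_lt_of_le h (hρleM ω))
      filter_upwards with ω
      have hm : ω ∉ {ω | n < ρ ω} := hempty ω
      simp [Set.indicator_of_notMem hm]
  -- compute the conditional expectation
  calc stoppedProcess V ρ' n
      =ᵐ[μ] μ[stoppedProcess V ρ' n|ℱ n] :=
        Filter.EventuallyEq.of_eq (condExp_of_stronglyMeasurable (ℱ.le n)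
          (hadapted.stronglyAdapted.stoppedProcess_of_discrete hρ n)
          (integrable_stoppedProcess hρ hint n)).symm
    _ =ᵐ[μ] μ[stoppedProcess V ρ' (n + 1)|ℱ n] := by
        rw [hdecomp]
        refine Filter.EventuallyEq.symm ?_
        have h1 := condExp_add (integrable_stoppedProcess hρ hint n)
          (hintd.indicator ((ℱ.le n) _ hA)) (m := ℱ n) (μ := μ)
        refine h1.trans ?_
        have h2 := condExp_indicator hintd hA (μ := μ)
        have hVn := condExp_of_stronglyMeasurable (ℱ.le n) (hadapted.stronglyAdapted n) (hint n)
        have h3 : (μ[V (n + 1) - V n|ℱ n]) =ᵐ[μ] μ[V (n + 1)|ℱ n] - V n :=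
          (condExp_sub (hint (n + 1)) (hint n) _).trans
            (Filter.EventuallyEq.of_eq (by rw [hVn]))
        have h4 : {ω | n < ρ ω}.indicator (μ[V (n + 1) - V n|ℱ n])
            =ᵐ[μ] ({ω | n < ρ ω}).indicator (μ[V (n + 1)|ℱ n] - V n) := by
          filter_upwards [h3] with ω hω
          by_cases h : ω ∈ {ω | n < ρ ω} <;>
            simp [Set.indicator_of_mem, Set.indicator_of_notMem, h, hω]
        filter_upwards [h2, h4, key] with ω h2ω h4ω hkeyω
        have : (μ[Set.indicator {ω | n < ρ ω} (V (n + 1) - V n)|ℱ n]) ω = 0 := by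
          rw [h2ω]
          have := h4ω
          rw [this, hkeyω]
          rfl
        simp [this]
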